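/- Let n ≥ 2 and let K ⊆ Sⁿ be a compact convex subset that contains some (n−1)-hemisphere. Then K is one of the following: Sⁿ itself; a great (n−1)-sphere; an (n−1)-hemisphere; an n-hemisphere; or an n-bihedron. (Lemma 2.5 of the paper, with the degenerate case K equal to the (n−1)-hemisphere itself included.) -/

import Mathlib

open scoped RealInnerProductSpace

noncomputable section

/-- `Esp n` is `ℝ^{n+1}` with its standard inner product. -/
abbrev Esp (n : ℕ) : Type := EuclideanSpace ℝ (Fin (n + 1))

/-- The unit sphere `Sⁿ ⊆ ℝ^{n+1}`. -/
def sphereSet (n : ℕ) : Set (Esp n) := {x | ‖x‖ = 1}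

/-- A convex segment in `Sⁿ`: `{(cos t)·u + (sin t)·v : 0 ≤ t ≤ a}` for an
orthonormal pair `u, v` and some `a ∈ [0, π]`. -/
def IsConvexSegment {n : ℕ} (S : Set (Esp n)) : Prop :=
  ∃ (u v : Esp n) (a : ℝ), ‖u‖ = 1 ∧ ‖v‖ = 1 ∧ ⟪u, v⟫ = 0 ∧
    0 ≤ a ∧ a ≤ Real.pi ∧
    S = (fun t : ℝ => Real.cos t • u + Real.sin t • v) '' Set.Icc 0 a

/-- A subset of `Sⁿ` is convex if any two of its points are contained in a
convex segment contained in the set. -/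
def SphConvex {n : ℕ} (A : Set (Esp n)) : Prop :=
  ∀ x ∈ A, ∀ y ∈ A, ∃ S : Set (Esp n), IsConvexSegment S ∧ S ⊆ A ∧ x ∈ S ∧ y ∈ S

/-- A great `i`-sphere in `Sⁿ`: the intersection of `Sⁿ` with an
`(i+1)`-dimensional linear subspace. -/
def IsGreatSphere {n : ℕ} (i : ℕ) (S : Set (Esp n)) : Prop :=
  ∃ V : Submodule ℝ (Esp n), Module.finrank ℝ V = i + 1 ∧
    S = sphereSet n ∩ (V : Set (Esp n))

/-- An `i`-hemisphere in `Sⁿ`: `{x ∈ Sⁿ ∩ V : ⟨x, v⟩ ≥ 0}` for an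
`(i+1)`-dimensional subspace `V` and a unit vector `v ∈ V`. -/
def IsHemisphere {n : ℕ} (i : ℕ) (S : Set (Esp n)) : Prop :=
  ∃ (V : Submodule ℝ (Esp n)) (v : Esp n), Module.finrank ℝ V = i + 1 ∧
    ‖v‖ = 1 ∧ v ∈ V ∧
    S = {x ∈ sphereSet n ∩ (V : Set (Esp n)) | 0 ≤ ⟪x, v⟫}

/-- An `n`-bihedron: `{x ∈ Sⁿ : ⟨x, u⟩ ≥ 0 ∧ ⟨x, w⟩ ≥ 0}` for linearly
independent `u, w`. -/
def IsBihedron {n : ℕ} (S : Set (Esp n)) : Prop :=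
  ∃ u w : Esp n, LinearIndependent ℝ ![u, w] ∧
    S = {x ∈ sphereSet n | 0 ≤ ⟪x, u⟫ ∧ 0 ≤ ⟪x, w⟫}

section Aux
open Real Set

lemma scalar_core {s t a b : ℝ} (ha : 0 < a) (hb : 0 < b) (hst : s ≤ t)
    (hlt : t - s < π)
    (hunit : (a*Real.cos s + b*Real.cos t)^2 + (a*Real.sin s + b*Real.sin t)^2 = 1) :
    ∃ r ∈ Set.Icc s t, Real.cos r = a*Real.cos s + b*Real.cos t ∧
      Real.sin r = a*Real.sin s + b*Real.sin t := by
  set C := a*Real.cos s + b*Real.cos t with hC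
  set D := a*Real.sin s + b*Real.sin t with hD
  have hcont : Continuous (fun r => C * Real.sin r - D * Real.cos r) := by
    continuity
  have hsin : 0 ≤ Real.sin (t - s) :=
    Real.sin_nonneg_of_nonneg_of_le_pi (by linarith) (by linarith)
  have hgs : C * Real.sin s - D * Real.cos s = -(b * Real.sin (t - s)) := by
    rw [hC, hD, Real.sin_sub]; ring
  have hgt : C * Real.sin t - D * Real.cos t = a * Real.sin (t - s) := by
    rw [hC, hD, Real.sin_sub]; ring
  have h0mem : (0:ℝ) ∈ Set.Icc (C * Real.sin s - D * Real.cos s)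
      (C * Real.sin t - D * Real.cos t) := by
    constructor
    · rw [hgs]; nlinarith
    · rw [hgt]; nlinarith
  obtain ⟨r, hr, hgr⟩ := intermediate_value_Icc hst hcont.continuousOn h0mem
  have hgr0 : C * Real.sin r - D * Real.cos r = 0 := hgr
  set h := C * Real.cos r + D * Real.sin r with hh
  have key : h^2 + (C * Real.sin r - D * Real.cos r)^2
      = (C^2 + D^2) * ((Real.sin r)^2 + (Real.cos r)^2) := by
    rw [hh]; ring
  have hsq : h^2 = 1 := by
    rw [hgr0, Real.sin_sq_add_cos_sq, hunit] at key; linarith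
  have idC : h * Real.cos r + (C * Real.sin r - D * Real.cos r) * Real.sin r
      = C * ((Real.sin r)^2 + (Real.cos r)^2) := by rw [hh]; ring
  have idD : h * Real.sin r - (C * Real.sin r - D * Real.cos r) * Real.cos r
      = D * ((Real.sin r)^2 + (Real.cos r)^2) := by rw [hh]; ring
  rw [hgr0, Real.sin_sq_add_cos_sq] at idC idD
  have hmidpos : 0 < C * Real.cos ((s+t)/2) + D * Real.sin ((s+t)/2) := by
    have e1 : C * Real.cos ((s+t)/2) + D * Real.sin ((s+t)/2)
        = (a+b) * Real.cos ((t-s)/2) := by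
      have c1 := Real.cos_sub s ((s+t)/2)
      have c2 := Real.cos_sub t ((s+t)/2)
      have e2 : Real.cos (s - (s+t)/2) = Real.cos ((t-s)/2) := by
        rw [show s - (s+t)/2 = -((t-s)/2) by ring, Real.cos_neg]
      have e3 : Real.cos (t - (s+t)/2) = Real.cos ((t-s)/2) := by
        rw [show t - (s+t)/2 = (t-s)/2 by ring]
      rw [e2] at c1; rw [e3] at c2
      rw [hC, hD]
      linear_combination (-a) * c1 + (-b) * c2
    rw [e1]
    have : 0 < Real.cos ((t-s)/2) :=
      Real.cos_pos_of_mem_Ioo ⟨by linarith [Real.pi_pos], by linarith⟩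
    positivity
  have hne : h ≠ -1 := by
      intro hneg
      have hCr : C = -Real.cos r := by rw [hneg] at idC; linarith
      have hDr : D = -Real.sin r := by rw [hneg] at idD; linarith
      have hcosr : 0 < Real.cos (r - (s+t)/2) := by
        apply Real.cos_pos_of_mem_Ioo
        obtain ⟨hr1, hr2⟩ := hr
        exact ⟨by linarith, by linarith⟩
      have : C * Real.cos ((s+t)/2) + D * Real.sin ((s+t)/2)
          = -Real.cos (r - (s+t)/2) := by
        rw [hCr, hDr, Real.cos_sub]; ring
      linarith
  have hpos : h = 1 := by
    have hfac : (h - 1) * (h + 1) = 0 := by linear_combination hsq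
    rcases mul_eq_zero.mp hfac with h1 | h1
    · linarith
    · exact absurd (by linarith : h = -1) hne
  rw [hpos] at idC idD
  exact ⟨r, hr, by linarith, by linarith⟩

lemma norm_combo_sq {n : ℕ} {u u' : Esp n} (hu : ‖u‖ = 1) (hu' : ‖u'‖ = 1)
    (huu' : ⟪u, u'⟫ = 0) (C D : ℝ) : ‖C • u + D • u'‖^2 = C^2 + D^2 := by
  rw [norm_add_sq_real, norm_smul, norm_smul, real_inner_smul_left,
    real_inner_smul_right, huu', hu, hu']
  simp [mul_pow, sq_abs]

lemma segment_core {n : ℕ} {u u' : Esp n} (hu : ‖u‖ = 1) (hu' : ‖u'‖ = 1)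
    (huu' : ⟪u, u'⟫ = 0) {a b s t : ℝ} (ha : 0 < a) (hb : 0 < b)
    (hs0 : 0 ≤ s) (hst : s ≤ t) (htp : t ≤ Real.pi) (hne : t - s ≠ Real.pi)
    {z : Esp n}
    (hz : z = a • (Real.cos s • u + Real.sin s • u')
        + b • (Real.cos t • u + Real.sin t • u'))
    (hnz : ‖z‖ = 1) :
    ∃ r ∈ Set.Icc s t, z = Real.cos r • u + Real.sin r • u' := by
  have hzC : z = (a*Real.cos s + b*Real.cos t) • u
      + (a*Real.sin s + b*Real.sin t) • u' := by rw [hz]; module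
  have hCD : (a*Real.cos s + b*Real.cos t)^2 + (a*Real.sin s + b*Real.sin t)^2 = 1 := by
    have := norm_combo_sq hu hu' huu' (a*Real.cos s + b*Real.cos t)
      (a*Real.sin s + b*Real.sin t)
    rw [← hzC, hnz] at this
    linarith [this]
  obtain ⟨r, hr, hcos, hsin⟩ := scalar_core ha hb hst
    (lt_of_le_of_ne (by linarith) hne) hCD
  exact ⟨r, hr, by rw [hzC, hcos, hsin]⟩

lemma combo_mem {n : ℕ} {K : Set (Esp n)} (hc : SphConvex K)
    {x y z : Esp n} (hx : x ∈ K) (hy : y ∈ K) {a b : ℝ} (ha : 0 < a) (hb : 0 < b)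
    (hz : z = a • x + b • y) (hnz : ‖z‖ = 1) (hxy : y ≠ -x) : z ∈ K := by
  obtain ⟨S, hSseg, hSK, hxS, hyS⟩ := hc x hx y hy
  obtain ⟨u, u', a₀, hu, hu', huu', ha₀, ha₀p, hSeq⟩ := hSseg
  rw [hSeq] at hxS hyS
  obtain ⟨s, hsmem, hsx⟩ := hxS
  obtain ⟨t, htmem, hty⟩ := hyS
  simp only [Set.mem_Icc] at hsmem htmem
  rcases le_total s t with hst | hst
  · have hne : t - s ≠ Real.pi := by
      intro heq
      apply hxy
      have hs0 : s = 0 := by linarith [hsmem.1, htmem.2, Real.pi_pos]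
      have ht0 : t = Real.pi := by linarith
      rw [← hsx, ← hty, hs0, ht0]
      simp
    obtain ⟨r, hrmem, hreq⟩ := segment_core hu hu' huu' ha hb hsmem.1 hst
      (le_trans htmem.2 ha₀p) hne (by rw [hz, ← hsx, ← hty]) hnz
    apply hSK
    rw [hSeq]
    exact ⟨r, ⟨le_trans hsmem.1 hrmem.1, le_trans hrmem.2 htmem.2⟩, hreq.symm⟩
  · have hne : s - t ≠ Real.pi := by
      intro heq
      apply hxy
      have ht0 : t = 0 := by linarith [htmem.1, hsmem.2, Real.pi_pos]
      have hs0 : s = Real.pi := by linarith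
      rw [← hsx, ← hty, hs0, ht0]
      simp
    obtain ⟨r, hrmem, hreq⟩ := segment_core hu hu' huu' hb ha htmem.1 hst
      (le_trans hsmem.2 ha₀p) hne (by rw [hz, ← hsx, ← hty]; module) hnz
    apply hSK
    rw [hSeq]
    exact ⟨r, ⟨le_trans htmem.1 hrmem.1, le_trans hrmem.2 hsmem.2⟩, hreq.symm⟩

lemma norm_combo_one {n : ℕ} {u u' : Esp n} (hu : ‖u‖ = 1) (hu' : ‖u'‖ = 1)
    (huu' : ⟪u, u'⟫ = 0) {C D : ℝ} (h : C^2 + D^2 = 1) : ‖C • u + D • u'‖ = 1 := by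
  have h2 := norm_combo_sq hu hu' huu' C D
  rw [h] at h2
  nlinarith [norm_nonneg (C • u + D • u')]

def eVW {n : ℕ} (v w : Esp n) (θ : ℝ) : Esp n := Real.cos θ • v + Real.sin θ • w

lemma inner_combo {n : ℕ} (x v w : Esp n) (C D : ℝ) :
    ⟪x, C • v + D • w⟫ = C * ⟪x,v⟫ + D * ⟪x,w⟫ := by
  rw [inner_add_right, real_inner_smul_right, real_inner_smul_right]

lemma inner_eVW_right {n : ℕ} (x v w : Esp n) (θ : ℝ) :
    ⟪x, eVW v w θ⟫ = Real.cos θ * ⟪x,v⟫ + Real.sin θ * ⟪x,w⟫ :=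
  inner_combo x v w _ _

lemma norm_eVW {n : ℕ} {v w : Esp n} (hv : ‖v‖ = 1) (hw : ‖w‖ = 1)
    (hvw : ⟪v, w⟫ = 0) (θ : ℝ) : ‖eVW v w θ‖ = 1 :=
  norm_combo_one hv hw hvw (by rw [← Real.sin_sq_add_cos_sq θ]; ring)

lemma inner_eVW_eVW {n : ℕ} {v w : Esp n} (hv : ‖v‖ = 1) (hw : ‖w‖ = 1)
    (hvw : ⟪v, w⟫ = 0) (θ₁ θ₂ : ℝ) :
    ⟪eVW v w θ₁, eVW v w θ₂⟫ = Real.cos (θ₂ - θ₁) := by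
  have hwv : ⟪w, v⟫ = (0:ℝ) := by rw [real_inner_comm]; exact hvw
  rw [eVW, eVW, inner_add_left, real_inner_smul_left, real_inner_smul_left,
    inner_combo, inner_combo, real_inner_self_eq_norm_mul_norm,
    real_inner_self_eq_norm_mul_norm, hv, hw, hwv, Real.cos_sub]
  rw [hvw]
  ring

lemma arc_mem {n : ℕ} {K : Set (Esp n)} (hc : SphConvex K) {v w : Esp n}
    (hv : ‖v‖ = 1) (hw : ‖w‖ = 1) (hvw : ⟪v, w⟫ = 0)
    {θ₁ θ₂ : ℝ} (h1 : eVW v w θ₁ ∈ K) (h2 : eVW v w θ₂ ∈ K) (hle : θ₁ ≤ θ₂)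
    (hlt : θ₂ - θ₁ < Real.pi) : ∀ r ∈ Set.Icc θ₁ θ₂, eVW v w r ∈ K := by
  intro r hr
  obtain ⟨hr1, hr2⟩ := hr
  rcases eq_or_lt_of_le hr1 with h | h
  · rwa [← h]
  rcases eq_or_lt_of_le hr2 with h' | h'
  · rwa [h']
  have hΔ : 0 < Real.sin (θ₂ - θ₁) :=
    Real.sin_pos_of_pos_of_lt_pi (by linarith) hlt
  set a := Real.sin (θ₂ - r) / Real.sin (θ₂ - θ₁) with ha_def
  set b := Real.sin (r - θ₁) / Real.sin (θ₂ - θ₁) with hb_def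
  have hap : 0 < a :=
    div_pos (Real.sin_pos_of_pos_of_lt_pi (by linarith) (by linarith)) hΔ
  have hbp : 0 < b :=
    div_pos (Real.sin_pos_of_pos_of_lt_pi (by linarith) (by linarith)) hΔ
  have hcos : Real.cos r = a * Real.cos θ₁ + b * Real.cos θ₂ := by
    rw [ha_def, hb_def]
    field_simp
    rw [Real.sin_sub, Real.sin_sub, Real.sin_sub]
    ring
  have hsin : Real.sin r = a * Real.sin θ₁ + b * Real.sin θ₂ := by
    rw [ha_def, hb_def]
    field_simp
    rw [Real.sin_sub, Real.sin_sub, Real.sin_sub]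
    ring
  have hz : eVW v w r = a • eVW v w θ₁ + b • eVW v w θ₂ := by
    have hmod : a • eVW v w θ₁ + b • eVW v w θ₂
        = (a * Real.cos θ₁ + b * Real.cos θ₂) • v
          + (a * Real.sin θ₁ + b * Real.sin θ₂) • w := by
      rw [eVW, eVW]; module
    rw [hmod, eVW, ← hcos, ← hsin]
  have hne : eVW v w θ₂ ≠ -(eVW v w θ₁) := by
    intro hcontra
    have h1' := inner_eVW_eVW hv hw hvw θ₁ θ₂
    rw [hcontra, inner_neg_right, real_inner_self_eq_norm_mul_norm,
      norm_eVW hv hw hvw] at h1'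
    have hgt : Real.cos Real.pi < Real.cos (θ₂ - θ₁) :=
      Real.cos_lt_cos_of_nonneg_of_le_pi (by linarith) (le_refl _) hlt
    rw [Real.cos_pi] at hgt
    rw [← h1'] at hgt
    norm_num at hgt
  exact combo_mem hc h1 h2 hap hbp hz (norm_eVW hv hw hvw r) hne

lemma eVW_zero {n : ℕ} (v w : Esp n) : eVW v w 0 = v := by simp [eVW]
lemma eVW_pi {n : ℕ} (v w : Esp n) : eVW v w Real.pi = -v := by simp [eVW]
lemma eVW_neg_w {n : ℕ} (v w : Esp n) (θ : ℝ) : eVW v (-w) θ = eVW v w (-θ) := by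
  simp [eVW, Real.cos_neg, Real.sin_neg, smul_neg, neg_smul]
lemma eVW_add_two_pi {n : ℕ} (v w : Esp n) (θ : ℝ) :
    eVW v w (θ + 2*Real.pi) = eVW v w θ := by
  simp [eVW, Real.cos_add_two_pi, Real.sin_add_two_pi]

def BSet {n : ℕ} (K : Set (Esp n)) (v w : Esp n) : Set ℝ :=
  {θ | θ ∈ Set.Icc 0 Real.pi ∧ ∀ s ∈ Set.Icc 0 θ, eVW v w s ∈ K}
def alphaOf {n : ℕ} (K : Set (Esp n)) (v w : Esp n) : ℝ := sSup (BSet K v w)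

section alpha
variable {n : ℕ} {K : Set (Esp n)} {v w : Esp n}

lemma zero_mem_BSet (hvK : v ∈ K) : 0 ∈ BSet K v w := by
  refine ⟨⟨le_refl _, Real.pi_pos.le⟩, fun s hs => ?_⟩
  have : s = 0 := le_antisymm hs.2 hs.1
  rw [this, eVW_zero]; exact hvK

lemma BSet_bdd : BddAbove (BSet K v w) := ⟨Real.pi, fun θ hθ => hθ.1.2⟩

lemma alpha_nonneg (hvK : v ∈ K) : 0 ≤ alphaOf K v w :=
  le_csSup BSet_bdd (zero_mem_BSet hvK)

lemma alpha_le_pi (hvK : v ∈ K) : alphaOf K v w ≤ Real.pi :=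
  csSup_le ⟨0, zero_mem_BSet hvK⟩ fun θ hθ => hθ.1.2

lemma cont_eVW : Continuous (eVW v w) := by
  exact (Real.continuous_cos.smul continuous_const).add
    (Real.continuous_sin.smul continuous_const)

lemma alpha_spec (hcpt : IsCompact K) (hvK : v ∈ K) :
    ∀ s ∈ Set.Icc 0 (alphaOf K v w), eVW v w s ∈ K := by
  set α := alphaOf K v w with hα
  have hIco : ∀ s, 0 ≤ s → s < α → eVW v w s ∈ K := by
    intro s hs0 hsα
    obtain ⟨θ, hθB, hsθ⟩ := exists_lt_of_lt_csSup ⟨0, zero_mem_BSet hvK⟩ hsα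
    exact hθB.2 s ⟨hs0, hsθ.le⟩
  intro s hs
  rcases lt_or_eq_of_le hs.2 with h | h
  · exact hIco s hs.1 h
  · rcases eq_or_lt_of_le (alpha_nonneg (w := w) hvK) with h0 | h0
    · rw [h]
      have : α = 0 := by rw [hα, ← h0]
      rw [this, eVW_zero]; exact hvK
    · have hclosed : IsClosed (eVW v w ⁻¹' K) :=
        (hcpt.isClosed).preimage cont_eVW
      have hsub : Set.Ico 0 α ⊆ eVW v w ⁻¹' K := fun r hr => hIco r hr.1 hr.2
      have : α ∈ closure (Set.Ico 0 α) := by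
        rw [closure_Ico (ne_of_lt h0)]
        exact Set.right_mem_Icc.mpr h0.le
      have := (closure_mono hsub) this
      rw [hclosed.closure_eq] at this
      rw [h]
      exact this

lemma alpha_max (hc : SphConvex K) (hv : ‖v‖ = 1) (hw : ‖w‖ = 1)
    (hvw : ⟪v, w⟫ = 0) (hvK : v ∈ K) {θ : ℝ} (hθ0 : 0 ≤ θ) (hθπ : θ < Real.pi)
    (hθK : eVW v w θ ∈ K) : θ ≤ alphaOf K v w := by
  apply le_csSup BSet_bdd
  refine ⟨⟨hθ0, hθπ.le⟩, ?_⟩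
  have h1 : eVW v w 0 ∈ K := by rw [eVW_zero]; exact hvK
  exact arc_mem hc hv hw hvw h1 hθK hθ0 (by linarith)

lemma alpha_eq_pi (hc : SphConvex K) (hcpt : IsCompact K) (hv : ‖v‖ = 1)
    (hw : ‖w‖ = 1) (hvw : ⟪v, w⟫ = 0) (hvK : v ∈ K)
    (hneg : -v ∈ K) (hpos : 0 < alphaOf K v w) : alphaOf K v w = Real.pi := by
  set α := alphaOf K v w with hα
  have hαK : eVW v w α ∈ K :=
    alpha_spec hcpt hvK α ⟨hpos.le, le_refl _⟩
  have hπK : eVW v w Real.pi ∈ K := by rw [eVW_pi]; exact hneg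
  have harc := arc_mem hc hv hw hvw hαK hπK (alpha_le_pi hvK) (by linarith)
  have hπB : Real.pi ∈ BSet K v w := by
    refine ⟨⟨Real.pi_pos.le, le_refl _⟩, fun s hs => ?_⟩
    rcases le_total s α with h | h
    · exact alpha_spec hcpt hvK s ⟨hs.1, h⟩
    · exact harc s ⟨h, hs.2⟩
  exact le_antisymm (alpha_le_pi hvK) (le_csSup BSet_bdd hπB)

end alpha

lemma exists_angle {c d : ℝ} (h : c^2 + d^2 = 1) :
    ∃ θ, -Real.pi < θ ∧ θ ≤ Real.pi ∧ Real.cos θ = c ∧ Real.sin θ = d := by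
  have hc1 : -1 ≤ c := by nlinarith
  have hc2 : c ≤ 1 := by nlinarith
  have hcos : Real.cos (Real.arccos c) = c := Real.cos_arccos hc1 hc2
  have hsin : Real.sin (Real.arccos c) = Real.sqrt (1 - c^2) := Real.sin_arccos c
  have hd2 : 1 - c^2 = d^2 := by linarith
  have hsin' : Real.sin (Real.arccos c) = |d| := by
    rw [hsin, hd2, Real.sqrt_sq_eq_abs]
  rcases le_or_gt 0 d with hd | hd
  · exact ⟨Real.arccos c, by linarith [Real.arccos_nonneg c, Real.pi_pos],
      Real.arccos_le_pi c, hcos, by rw [hsin', abs_of_nonneg hd]⟩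
  · have hne : Real.arccos c < Real.pi := by
      rcases lt_or_eq_of_le (Real.arccos_le_pi c) with h' | h'
      · exact h'
      · exfalso
        have : Real.sin (Real.arccos c) = 0 := by rw [h', Real.sin_pi]
        rw [hsin'] at this
        have : d = 0 := abs_eq_zero.mp this
        linarith
    refine ⟨-Real.arccos c, by linarith, by linarith [Real.arccos_nonneg c, Real.pi_pos],
      by rw [Real.cos_neg]; exact hcos, ?_⟩
    rw [Real.sin_neg, hsin', abs_of_neg hd]; ring

section char
variable {n : ℕ} {K : Set (Esp n)} {v w : Esp n}

/-- The hemisphere hypothesis in scalar form. -/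
def HemiHyp (K : Set (Esp n)) (v w : Esp n) : Prop :=
  ∀ x : Esp n, ‖x‖ = 1 → ⟪x, w⟫ = 0 → 0 ≤ ⟪x, v⟫ → x ∈ K

set_option maxHeartbeats 1000000 in
lemma memK_iff (hK : K ⊆ sphereSet n) (hc : SphConvex K)
    (hv : ‖v‖ = 1) (hw : ‖w‖ = 1) (hvw : ⟪v, w⟫ = 0) (hH : HemiHyp K v w)
    {x : Esp n} (hx : ‖x‖ = 1) :
    x ∈ K ↔ ((⟪x, v⟫ = 0 ∧ ⟪x, w⟫ = 0) ∨
      ∃ θ, -Real.pi < θ ∧ θ ≤ Real.pi ∧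
        Real.cos θ * Real.sqrt (⟪x, v⟫^2 + ⟪x, w⟫^2) = ⟪x, v⟫ ∧
        Real.sin θ * Real.sqrt (⟪x, v⟫^2 + ⟪x, w⟫^2) = ⟪x, w⟫ ∧
        eVW v w θ ∈ K) := by
  have hwv : ⟪w, v⟫ = (0:ℝ) := by rw [real_inner_comm]; exact hvw
  have hvv : ⟪v, v⟫ = (1:ℝ) := by
    rw [real_inner_self_eq_norm_mul_norm, hv]; norm_num
  have hww : ⟪w, w⟫ = (1:ℝ) := by
    rw [real_inner_self_eq_norm_mul_norm, hw]; norm_num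
  set c := ⟪x, v⟫ with hc_def
  set d := ⟪x, w⟫ with hd_def
  set R := Real.sqrt (c^2 + d^2) with hR_def
  set y := x - c • v - d • w with hy_def
  have hyv : ⟪y, v⟫ = 0 := by
    rw [hy_def, inner_sub_left, inner_sub_left, real_inner_smul_left,
      real_inner_smul_left, hvv, hwv, ← hc_def]; ring
  have hyw : ⟪y, w⟫ = 0 := by
    rw [hy_def, inner_sub_left, inner_sub_left, real_inner_smul_left,
      real_inner_smul_left, hvw, hww, ← hd_def]; ring
  have hxy : x = y + (c • v + d • w) := by rw [hy_def]; abel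
  have hnormy : ‖y‖^2 = 1 - c^2 - d^2 := by
    have h1 : ⟪y, y⟫ = ‖y‖^2 := by
      rw [real_inner_self_eq_norm_mul_norm]; ring
    have h2 : ⟪y, x⟫ = ‖y‖^2 := by
      nth_rewrite 1 [hxy]
      rw [inner_add_right, inner_add_right, real_inner_smul_right,
        real_inner_smul_right, hyv, hyw, h1]; ring
    have h3 : ⟪x, x⟫ = (1:ℝ) := by
      rw [real_inner_self_eq_norm_mul_norm, hx]; norm_num
    have h4 : ⟪x, y⟫ = ‖y‖^2 := by rw [real_inner_comm]; exact h2
    have h5 : ⟪x, x⟫ = ⟪x, y⟫ + c^2 + d^2 := by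
      nth_rewrite 2 [hxy]
      rw [inner_add_right, inner_add_right, real_inner_smul_right,
        real_inner_smul_right, ← hc_def, ← hd_def]; ring
    rw [h3, h4] at h5; linarith
  constructor
  · -- forward
    intro hxK
    by_cases hcd : c = 0 ∧ d = 0
    · exact Or.inl hcd
    · have hRpos : 0 < R := by
        rw [hR_def]
        apply Real.sqrt_pos.mpr
        rcases (not_and_or.mp hcd) with h' | h'
        · positivity
        · positivity
      have hR0 : R ≠ 0 := ne_of_gt hRpos
      have hR2 : R^2 = c^2 + d^2 := Real.sq_sqrt (by positivity)
      have hang : (c/R)^2 + (d/R)^2 = 1 := by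
        rw [div_pow, div_pow, ← add_div, ← hR2, div_self (pow_ne_zero 2 hR0)]
      obtain ⟨θ, hθ1, hθ2, hθc, hθs⟩ := exists_angle hang
      have hu_eq : eVW v w θ = R⁻¹ • (c • v + d • w) := by
        rw [eVW, hθc, hθs, div_eq_inv_mul, div_eq_inv_mul, smul_add, smul_smul, smul_smul]
      refine Or.inr ⟨θ, hθ1, hθ2, ?_, ?_, ?_⟩
      · rw [hθc, div_mul_cancel₀ _ hR0]
      · rw [hθs, div_mul_cancel₀ _ hR0]
      · -- eVW v w θ ∈ K
        by_cases hy0 : y = 0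
        · have hxcd : x = c • v + d • w := by
            rw [hxy, hy0, zero_add]
          have hR1 : R = 1 := by
            have := hnormy
            rw [hy0, norm_zero] at this
            have hcd1 : c^2 + d^2 = 1 := by
              simpa using by linarith [this]
            rw [hR_def, hcd1, Real.sqrt_one]
          rw [hu_eq, hR1, ← hxcd]
          simpa using hxK
        · have hny : 0 < ‖y‖ := norm_pos_iff.mpr hy0
          set m := -(‖y‖⁻¹ • y) with hm_def
          have hmK : m ∈ K := by
            apply hH
            · rw [hm_def, norm_neg, norm_smul, norm_inv, norm_norm]
              exact inv_mul_cancel₀ (ne_of_gt hny)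
            · rw [hm_def, inner_neg_left, real_inner_smul_left, hyw]; ring
            · rw [hm_def, inner_neg_left, real_inner_smul_left, hyv]; simp
          have hcomb : eVW v w θ = R⁻¹ • x + (‖y‖ * R⁻¹) • m := by
            have h1 : (‖y‖ * R⁻¹) • m = -(R⁻¹ • y) := by
              rw [hm_def, smul_neg, smul_smul]
              rw [show ‖y‖ * R⁻¹ * ‖y‖⁻¹ = R⁻¹ by
                rw [mul_comm ‖y‖ R⁻¹, mul_assoc, mul_inv_cancel₀ (ne_of_gt hny), mul_one]]
            have hxmy : x - y = c • v + d • w := by rw [hy_def]; abel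
            rw [hu_eq, h1, ← hxmy, smul_sub]
            abel
          have hnorm1 : ‖eVW v w θ‖ = 1 :=
            norm_combo_one hv hw hvw (by rw [← Real.sin_sq_add_cos_sq θ]; ring)
          apply combo_mem hc hxK hmK (by positivity) (by positivity) hcomb hnorm1
          -- m ≠ -x
          intro hmx
          have : x = ‖y‖⁻¹ • y := by
            have := hmx
            rw [hm_def] at this
            have := neg_injective this
            rw [← this]
          have hc0 : c = 0 := by
            rw [hc_def, this, real_inner_smul_left, hyv]; ring
          have hd0 : d = 0 := by
            rw [hd_def, this, real_inner_smul_left, hyw]; ring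
          exact hcd ⟨hc0, hd0⟩
  · -- backward
    rintro (⟨hc0, hd0⟩ | ⟨θ, hθ1, hθ2, hθc, hθs, hθK⟩)
    · exact hH x hx hd0 (by rw [← hc_def, hc0])
    · by_cases hcd : c = 0 ∧ d = 0
      · exact hH x hx hcd.2 (by rw [← hc_def, hcd.1])
      have hRpos : 0 < R := by
        rw [hR_def]
        apply Real.sqrt_pos.mpr
        rcases (not_and_or.mp hcd) with h' | h'
        · positivity
        · positivity
      have hRe : R • eVW v w θ = c • v + d • w := by
        rw [eVW, smul_add, smul_smul, smul_smul, mul_comm R, mul_comm R, hθc, hθs]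
      by_cases hy0 : y = 0
      · have hxcd : x = c • v + d • w := by rw [hxy, hy0, zero_add]
        have hR1 : R = 1 := by
          have := hnormy
          rw [hy0, norm_zero] at this
          have hcd1 : c^2 + d^2 = 1 := by simpa using by linarith [this]
          rw [hR_def, hcd1, Real.sqrt_one]
        have : x = eVW v w θ := by
          rw [hxcd, ← hRe, hR1, one_smul]
        rw [this]; exact hθK
      · have hny : 0 < ‖y‖ := norm_pos_iff.mpr hy0
        set y' := ‖y‖⁻¹ • y with hy'_def
        have hy'K : y' ∈ K := by
          apply hH
          · rw [hy'_def, norm_smul, norm_inv, norm_norm]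
            exact inv_mul_cancel₀ (ne_of_gt hny)
          · rw [hy'_def, real_inner_smul_left, hyw]; ring
          · rw [hy'_def, real_inner_smul_left, hyv]; simp
        have hcomb : x = R • eVW v w θ + ‖y‖ • y' := by
          rw [hRe, hy'_def, smul_smul]
          rw [show ‖y‖ * ‖y‖⁻¹ = 1 from mul_inv_cancel₀ (ne_of_gt hny), one_smul, hxy]
          abel
        apply combo_mem hc hθK hy'K hRpos hny hcomb hx
        -- y' ≠ -(eVW v w θ)
        intro hy'e
        have h1 : ⟪y', v⟫ = 0 := by rw [hy'_def, real_inner_smul_left, hyv]; ring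
        have h2 : ⟪y', w⟫ = 0 := by rw [hy'_def, real_inner_smul_left, hyw]; ring
        rw [hy'e] at h1 h2
        rw [eVW, inner_neg_left, inner_add_left, real_inner_smul_left,
          real_inner_smul_left, hvv, hwv] at h1
        rw [eVW, inner_neg_left, inner_add_left, real_inner_smul_left,
          real_inner_smul_left, hvw, hww] at h2
        have hcos0 : Real.cos θ = 0 := by linarith [h1]
        have hsin0 : Real.sin θ = 0 := by linarith [h2]
        have := Real.sin_sq_add_cos_sq θ
        rw [hcos0, hsin0] at this
        norm_num at this

end char

section C6
variable {n : ℕ} {K : Set (Esp n)} {v w : Esp n}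

lemma mem_of_angle (hK : K ⊆ sphereSet n) (hc : SphConvex K)
    (hv : ‖v‖ = 1) (hw : ‖w‖ = 1) (hvw : ⟪v, w⟫ = 0) (hH : HemiHyp K v w)
    {x : Esp n} (hx : ‖x‖ = 1)
    (h : ∀ θ, -Real.pi < θ → θ ≤ Real.pi →
      0 < Real.sqrt (⟪x, v⟫^2 + ⟪x, w⟫^2) →
      Real.cos θ * Real.sqrt (⟪x, v⟫^2 + ⟪x, w⟫^2) = ⟪x, v⟫ →
      Real.sin θ * Real.sqrt (⟪x, v⟫^2 + ⟪x, w⟫^2) = ⟪x, w⟫ →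
      eVW v w θ ∈ K) : x ∈ K := by
  apply (memK_iff hK hc hv hw hvw hH hx).mpr
  by_cases hcd : ⟪x, v⟫ = 0 ∧ ⟪x, w⟫ = 0
  · exact Or.inl hcd
  · set c := ⟪x, v⟫
    set d := ⟪x, w⟫
    have hRpos : 0 < Real.sqrt (c^2 + d^2) := by
      apply Real.sqrt_pos.mpr
      rcases (not_and_or.mp hcd) with h' | h'
      · positivity
      · positivity
    set R := Real.sqrt (c^2 + d^2) with hR_def
    have hR0 : R ≠ 0 := ne_of_gt hRpos
    have hR2 : R^2 = c^2 + d^2 := Real.sq_sqrt (by positivity)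
    have hang : (c/R)^2 + (d/R)^2 = 1 := by
      rw [div_pow, div_pow, ← add_div, ← hR2, div_self (pow_ne_zero 2 hR0)]
    obtain ⟨θ, hθ1, hθ2, hθc, hθs⟩ := exists_angle hang
    have e1 : Real.cos θ * R = c := by rw [hθc, div_mul_cancel₀ _ hR0]
    have e2 : Real.sin θ * R = d := by rw [hθs, div_mul_cancel₀ _ hR0]
    exact Or.inr ⟨θ, hθ1, hθ2, e1, e2, h θ hθ1 hθ2 hRpos e1 e2⟩

/-- Common context for the case analysis. -/
lemma case_sphere (hK : K ⊆ sphereSet n) (hcpt : IsCompact K) (hc : SphConvex K)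
    (hv : ‖v‖ = 1) (hw : ‖w‖ = 1) (hvw : ⟪v, w⟫ = 0) (hH : HemiHyp K v w)
    (hα : alphaOf K v w = Real.pi) (hβ : alphaOf K v (-w) = Real.pi) :
    K = sphereSet n := by
  have hvK : v ∈ K := hH v hv hvw
    (by rw [real_inner_self_eq_norm_mul_norm, hv]; norm_num)
  apply Set.Subset.antisymm hK
  intro x hx
  apply mem_of_angle hK hc hv hw hvw hH hx
  intro θ hθ1 hθ2 _ _ _
  rcases le_or_gt 0 θ with h | h
  · exact alpha_spec hcpt hvK θ ⟨h, by rw [hα] at *; exact hθ2⟩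
  · have := alpha_spec (w := -w) hcpt hvK (-θ) ⟨by linarith, by rw [hβ]; linarith⟩
    rwa [eVW_neg_w, neg_neg] at this

lemma case_great (hK : K ⊆ sphereSet n) (hcpt : IsCompact K) (hc : SphConvex K)
    (hv : ‖v‖ = 1) (hw : ‖w‖ = 1) (hvw : ⟪v, w⟫ = 0) (hH : HemiHyp K v w)
    (hneg : -v ∈ K)
    (hα : alphaOf K v w = 0) (hβ : alphaOf K v (-w) = 0) :
    K = {x ∈ sphereSet n | ⟪x, w⟫ = 0} := by
  have hvK : v ∈ K := hH v hv hvw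
    (by rw [real_inner_self_eq_norm_mul_norm, hv]; norm_num)
  have hw' : ‖(-w)‖ = 1 := by rw [norm_neg]; exact hw
  have hvw' : ⟪v, -w⟫ = (0:ℝ) := by rw [inner_neg_right, hvw, neg_zero]
  ext x
  constructor
  · intro hxK
    have hx : ‖x‖ = 1 := hK hxK
    refine ⟨hx, ?_⟩
    obtain h | ⟨θ, hθ1, hθ2, hθc, hθs, hθK⟩ := (memK_iff hK hc hv hw hvw hH hx).mp hxK
    · exact h.2
    · rcases eq_or_lt_of_le hθ2 with hpi | hpi
      · rw [← hθs, hpi, Real.sin_pi, zero_mul]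
      rcases le_or_gt 0 θ with h0 | h0
      · have := alpha_max hc hv hw hvw hvK h0 hpi hθK
        rw [hα] at this
        have hθ0 : θ = 0 := le_antisymm this h0
        rw [← hθs, hθ0, Real.sin_zero, zero_mul]
      · exfalso
        have hθK' : eVW v (-w) (-θ) ∈ K := by rw [eVW_neg_w, neg_neg]; exact hθK
        have := alpha_max hc hv hw' hvw' hvK (by linarith) (by linarith) hθK'
        rw [hβ] at this
        linarith
  · rintro ⟨hx, hd0⟩
    apply mem_of_angle hK hc hv hw hvw hH hx
    intro θ hθ1 hθ2 hR hθc hθs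
    have hz : Real.sin θ * Real.sqrt (⟪x, v⟫^2 + ⟪x, w⟫^2) = 0 := by rw [hθs, hd0]
    have hsin0 : Real.sin θ = 0 := by
      rcases mul_eq_zero.mp hz with h | h
      · exact h
      · exact absurd h (ne_of_gt hR)
    rcases eq_or_lt_of_le hθ2 with hpi | hpi
    · rw [hpi, eVW_pi]; exact hneg
    · have hθ0 : θ = 0 := by
        rwa [Real.sin_eq_zero_iff_of_lt_of_lt hθ1 hpi] at hsin0
      rw [hθ0, eVW_zero]; exact hvK

lemma case_hset (hK : K ⊆ sphereSet n) (hcpt : IsCompact K) (hc : SphConvex K)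
    (hv : ‖v‖ = 1) (hw : ‖w‖ = 1) (hvw : ⟪v, w⟫ = 0) (hH : HemiHyp K v w)
    (hneg : -v ∉ K)
    (hα : alphaOf K v w = 0) (hβ : alphaOf K v (-w) = 0) :
    K = {x ∈ sphereSet n | ⟪x, w⟫ = 0 ∧ 0 ≤ ⟪x, v⟫} := by
  have hvK : v ∈ K := hH v hv hvw
    (by rw [real_inner_self_eq_norm_mul_norm, hv]; norm_num)
  have hw' : ‖(-w)‖ = 1 := by rw [norm_neg]; exact hw
  have hvw' : ⟪v, -w⟫ = (0:ℝ) := by rw [inner_neg_right, hvw, neg_zero]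
  ext x
  constructor
  · intro hxK
    have hx : ‖x‖ = 1 := hK hxK
    refine ⟨hx, ?_⟩
    obtain h | ⟨θ, hθ1, hθ2, hθc, hθs, hθK⟩ := (memK_iff hK hc hv hw hvw hH hx).mp hxK
    · exact ⟨h.2, by rw [h.1]⟩
    · rcases eq_or_lt_of_le hθ2 with hpi | hpi
      · exfalso; rw [hpi, eVW_pi] at hθK; exact hneg hθK
      rcases le_or_gt 0 θ with h0 | h0
      · have := alpha_max hc hv hw hvw hvK h0 hpi hθK
        rw [hα] at this
        have hθ0 : θ = 0 := le_antisymm this h0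
        rw [← hθs, ← hθc, hθ0, Real.sin_zero, Real.cos_zero, zero_mul, one_mul]
        exact ⟨rfl, Real.sqrt_nonneg _⟩
      · exfalso
        have hθK' : eVW v (-w) (-θ) ∈ K := by rw [eVW_neg_w, neg_neg]; exact hθK
        have := alpha_max hc hv hw' hvw' hvK (by linarith) (by linarith) hθK'
        rw [hβ] at this
        linarith
  · rintro ⟨hx, hd0, hc0⟩
    exact hH x hx hd0 hc0

lemma eVW_neg_pi {n : ℕ} (v w : Esp n) : eVW v w (-Real.pi) = -v := by
  simp [eVW]

set_option maxHeartbeats 800000 in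
lemma case_hemi (hK : K ⊆ sphereSet n) (hcpt : IsCompact K) (hc : SphConvex K)
    (hv : ‖v‖ = 1) (hw : ‖w‖ = 1) (hvw : ⟪v, w⟫ = 0) (hH : HemiHyp K v w)
    (hsum : alphaOf K v w + alphaOf K v (-w) = Real.pi) :
    K = {x ∈ sphereSet n |
      0 ≤ ⟪x, Real.sin (alphaOf K v w) • v + (-Real.cos (alphaOf K v w)) • w⟫} := by
  have hvK : v ∈ K := hH v hv hvw
    (by rw [real_inner_self_eq_norm_mul_norm, hv]; norm_num)
  have hw' : ‖(-w)‖ = 1 := by rw [norm_neg]; exact hw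
  have hvw' : ⟪v, -w⟫ = (0:ℝ) := by rw [inner_neg_right, hvw, neg_zero]
  set a := alphaOf K v w with ha_def
  set b := alphaOf K v (-w) with hb_def
  have ha0 : 0 ≤ a := alpha_nonneg hvK
  have hb0 : 0 ≤ b := alpha_nonneg hvK
  have hapi : a ≤ Real.pi := alpha_le_pi hvK
  have hbpi : b ≤ Real.pi := alpha_le_pi hvK
  ext x
  constructor
  · intro hxK
    have hx : ‖x‖ = 1 := hK hxK
    refine ⟨hx, ?_⟩
    rw [inner_combo]
    set c := (⟪x, v⟫ : ℝ) with hc'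
    set d := (⟪x, w⟫ : ℝ) with hd'
    set R := Real.sqrt (c^2 + d^2) with hR'
    obtain h | ⟨θ, hθ1, hθ2, hθc, hθs, hθK⟩ := (memK_iff hK hc hv hw hvw hH hx).mp hxK
    · rw [hc', hd', h.1, h.2]; norm_num
    · rw [← hc', ← hd', ← hR'] at hθc hθs
      have hkey : Real.sin a * c + (-Real.cos a) * d
          = Real.sin (a - θ) * R := by
        rw [← hθc, ← hθs, Real.sin_sub]; ring
      rw [hkey]
      apply mul_nonneg _ (Real.sqrt_nonneg _)
      rcases eq_or_lt_of_le hθ2 with hpi | hpi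
      · have hnegv : -v ∈ K := by rw [hpi, eVW_pi] at hθK; exact hθK
        rcases eq_or_lt_of_le ha0 with h0 | h0
        · rw [hpi, ← h0]
          rw [show (0:ℝ) - Real.pi = -Real.pi by ring, Real.sin_neg, Real.sin_pi]
          norm_num
        · have hap : a = Real.pi := alpha_eq_pi hc hcpt hv hw hvw hvK hnegv h0
          rw [hpi, hap, sub_self, Real.sin_zero]
      · rcases le_or_gt 0 θ with h0 | h0
        · have hθa : θ ≤ a := alpha_max hc hv hw hvw hvK h0 hpi hθK
          exact Real.sin_nonneg_of_nonneg_of_le_pi (by linarith) (by linarith)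
        · have hθK' : eVW v (-w) (-θ) ∈ K := by rw [eVW_neg_w, neg_neg]; exact hθK
          have hθb : -θ ≤ b := alpha_max hc hv hw' hvw' hvK (by linarith) (by linarith) hθK'
          exact Real.sin_nonneg_of_nonneg_of_le_pi (by linarith) (by linarith)
  · rintro ⟨hx, hpos⟩
    rw [inner_combo] at hpos
    apply mem_of_angle hK hc hv hw hvw hH hx
    set c := (⟪x, v⟫ : ℝ) with hc'
    set d := (⟪x, w⟫ : ℝ) with hd'
    set R := Real.sqrt (c^2 + d^2) with hR'
    intro θ hθ1 hθ2 hR hθc hθs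
    have hkey : Real.sin a * c + (-Real.cos a) * d
        = Real.sin (a - θ) * R := by
      rw [← hθc, ← hθs, Real.sin_sub]; ring
    rw [hkey] at hpos
    have hsin : 0 ≤ Real.sin (a - θ) := by nlinarith
    rcases eq_or_lt_of_le hθ2 with hpi | hpi
    · -- θ = π
      rw [hpi]
      rw [hpi] at hsin
      have hsa' : Real.sin (a - Real.pi) = - Real.sin a := Real.sin_sub_pi a
      have hsa : Real.sin a ≤ 0 := by linarith
      rcases eq_or_lt_of_le ha0 with h0 | h0
      · -- a = 0, b = π
        have hbp : b = Real.pi := by rw [ha_def] at h0; linarith [hsum]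
        have := alpha_spec (w := -w) hcpt hvK Real.pi ⟨Real.pi_pos.le, by rw [← hb_def, hbp]⟩
        rw [eVW_neg_w, eVW_neg_pi] at this
        rw [eVW_pi]
        exact this
      · have hap : a = Real.pi := by
          by_contra hne
          have halt : a < Real.pi := lt_of_le_of_ne hapi hne
          have : 0 < Real.sin a := Real.sin_pos_of_pos_of_lt_pi h0 halt
          linarith
        exact alpha_spec hcpt hvK Real.pi ⟨Real.pi_pos.le, by rw [← ha_def, hap]⟩
    · rcases le_or_gt 0 θ with h0 | h0
      · have hθa : θ ≤ a := by
          by_contra hgt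
          push_neg at hgt
          have : Real.sin (a - θ) < 0 :=
            Real.sin_neg_of_neg_of_neg_pi_lt (by linarith) (by linarith)
          linarith
        exact alpha_spec hcpt hvK θ ⟨h0, hθa⟩
      · have hθb : -θ ≤ b := by
          by_contra hgt
          push_neg at hgt
          have h1 : Real.pi < a - θ := by linarith
          have h2 : a - θ - Real.pi < Real.pi := by linarith
          have hp := Real.sin_pos_of_pos_of_lt_pi (x := a - θ - Real.pi) (by linarith) h2
          rw [Real.sin_sub_pi] at hp
          linarith
        have := alpha_spec (w := -w) hcpt hvK (-θ) ⟨by linarith, hθb⟩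
        rwa [eVW_neg_w, neg_neg] at this

set_option maxHeartbeats 800000 in
lemma case_bihedron (hK : K ⊆ sphereSet n) (hcpt : IsCompact K) (hc : SphConvex K)
    (hv : ‖v‖ = 1) (hw : ‖w‖ = 1) (hvw : ⟪v, w⟫ = 0) (hH : HemiHyp K v w)
    (hneg : -v ∉ K)
    (h1 : 0 < alphaOf K v w + alphaOf K v (-w))
    (h2 : alphaOf K v w + alphaOf K v (-w) < Real.pi) :
    K = {x ∈ sphereSet n |
      0 ≤ ⟪x, Real.sin (alphaOf K v w) • v + (-Real.cos (alphaOf K v w)) • w⟫ ∧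
      0 ≤ ⟪x, Real.sin (alphaOf K v (-w)) • v + Real.cos (alphaOf K v (-w)) • w⟫} := by
  have hvK : v ∈ K := hH v hv hvw
    (by rw [real_inner_self_eq_norm_mul_norm, hv]; norm_num)
  have hw' : ‖(-w)‖ = 1 := by rw [norm_neg]; exact hw
  have hvw' : ⟪v, -w⟫ = (0:ℝ) := by rw [inner_neg_right, hvw, neg_zero]
  set a := alphaOf K v w with ha_def
  set b := alphaOf K v (-w) with hb_def
  have ha0 : 0 ≤ a := alpha_nonneg hvK
  have hb0 : 0 ≤ b := alpha_nonneg hvK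
  have hapi : a ≤ Real.pi := alpha_le_pi hvK
  have hbpi : b ≤ Real.pi := alpha_le_pi hvK
  have hapi' : a < Real.pi := by linarith
  have hbpi' : b < Real.pi := by linarith
  ext x
  constructor
  · intro hxK
    have hx : ‖x‖ = 1 := hK hxK
    refine ⟨hx, ?_⟩
    rw [inner_combo, inner_combo]
    set c := (⟪x, v⟫ : ℝ) with hc'
    set d := (⟪x, w⟫ : ℝ) with hd'
    set R := Real.sqrt (c^2 + d^2) with hR'
    obtain h | ⟨θ, hθ1, hθ2, hθc, hθs, hθK⟩ := (memK_iff hK hc hv hw hvw hH hx).mp hxK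
    · rw [hc', hd', h.1, h.2]; norm_num
    · rw [← hc', ← hd', ← hR'] at hθc hθs
      have hkey1 : Real.sin a * c + (-Real.cos a) * d = Real.sin (a - θ) * R := by
        rw [← hθc, ← hθs, Real.sin_sub]; ring
      have hkey2 : Real.sin b * c + Real.cos b * d = Real.sin (θ + b) * R := by
        rw [← hθc, ← hθs, Real.sin_add]; ring
      rw [hkey1, hkey2]
      have hpilt : θ < Real.pi := by
        rcases eq_or_lt_of_le hθ2 with hpi | hpi
        · exfalso; rw [hpi, eVW_pi] at hθK; exact hneg hθK
        · exact hpi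
      have hrange : -b ≤ θ ∧ θ ≤ a := by
        rcases le_or_gt 0 θ with h0 | h0
        · exact ⟨by linarith, alpha_max hc hv hw hvw hvK h0 hpilt hθK⟩
        · have hθK' : eVW v (-w) (-θ) ∈ K := by rw [eVW_neg_w, neg_neg]; exact hθK
          have := alpha_max hc hv hw' hvw' hvK (by linarith) (by linarith) hθK'
          exact ⟨by linarith, by linarith⟩
      constructor
      · apply mul_nonneg _ (Real.sqrt_nonneg _)
        exact Real.sin_nonneg_of_nonneg_of_le_pi (by linarith [hrange.2]) (by linarith [hrange.1])
      · apply mul_nonneg _ (Real.sqrt_nonneg _)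
        exact Real.sin_nonneg_of_nonneg_of_le_pi (by linarith [hrange.1]) (by linarith [hrange.2])
  · rintro ⟨hx, hpos1, hpos2⟩
    rw [inner_combo] at hpos1 hpos2
    apply mem_of_angle hK hc hv hw hvw hH hx
    set c := (⟪x, v⟫ : ℝ) with hc'
    set d := (⟪x, w⟫ : ℝ) with hd'
    set R := Real.sqrt (c^2 + d^2) with hR'
    intro θ hθ1 hθ2 hR hθc hθs
    have hkey1 : Real.sin a * c + (-Real.cos a) * d = Real.sin (a - θ) * R := by
      rw [← hθc, ← hθs, Real.sin_sub]; ring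
    have hkey2 : Real.sin b * c + Real.cos b * d = Real.sin (θ + b) * R := by
      rw [← hθc, ← hθs, Real.sin_add]; ring
    rw [hkey1] at hpos1
    rw [hkey2] at hpos2
    have hsin1 : 0 ≤ Real.sin (a - θ) := by nlinarith
    have hsin2 : 0 ≤ Real.sin (θ + b) := by nlinarith
    have hpilt : θ < Real.pi := by
      rcases eq_or_lt_of_le hθ2 with hpi | hpi
      · exfalso
        have hsa : Real.sin a ≤ 0 := by
          have := Real.sin_sub_pi a
          rw [hpi] at hsin1
          linarith
        have ha0' : a = 0 := by
          by_contra hne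
          have : 0 < Real.sin a :=
            Real.sin_pos_of_pos_of_lt_pi (lt_of_le_of_ne ha0 (Ne.symm hne)) hapi'
          linarith
        have hsb : Real.sin b ≤ 0 := by
          have hsp : Real.sin (Real.pi + b) = - Real.sin b := by
            rw [show Real.pi + b = b + Real.pi by ring, Real.sin_add_pi]
          rw [hpi] at hsin2
          linarith
        have hb0' : b = 0 := by
          by_contra hne
          have : 0 < Real.sin b :=
            Real.sin_pos_of_pos_of_lt_pi (lt_of_le_of_ne hb0 (Ne.symm hne)) hbpi'
          linarith
        rw [ha0', hb0'] at h1
        norm_num at h1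
      · exact hpi
    have hθa : θ ≤ a := by
      by_contra hgt
      push_neg at hgt
      have : Real.sin (a - θ) < 0 :=
        Real.sin_neg_of_neg_of_neg_pi_lt (by linarith) (by linarith)
      linarith
    have hθb : -b ≤ θ := by
      by_contra hgt
      push_neg at hgt
      have : Real.sin (θ + b) < 0 :=
        Real.sin_neg_of_neg_of_neg_pi_lt (by linarith) (by linarith)
      linarith
    rcases le_or_gt 0 θ with h0 | h0
    · exact alpha_spec hcpt hvK θ ⟨h0, hθa⟩
    · have := alpha_spec (w := -w) hcpt hvK (-θ) ⟨by linarith, by linarith⟩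
      rwa [eVW_neg_w, neg_neg] at this
end C6

section C7
variable {n : ℕ} {K : Set (Esp n)} {v w : Esp n}

lemma isHemisphere_of_sum (hK : K ⊆ sphereSet n) (hcpt : IsCompact K) (hc : SphConvex K)
    (hv : ‖v‖ = 1) (hw : ‖w‖ = 1) (hvw : ⟪v, w⟫ = 0) (hH : HemiHyp K v w)
    (hsum : alphaOf K v w + alphaOf K v (-w) = Real.pi) :
    IsHemisphere n K := by
  refine ⟨⊤, Real.sin (alphaOf K v w) • v + (-Real.cos (alphaOf K v w)) • w,
    ?_, ?_, Submodule.mem_top, ?_⟩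
  · rw [finrank_top, finrank_euclideanSpace_fin]
  · exact norm_combo_one hv hw hvw
      (by nlinarith [Real.sin_sq_add_cos_sq (alphaOf K v w)])
  · refine (case_hemi hK hcpt hc hv hw hvw hH hsum).trans ?_
    ext x
    simp only [Set.mem_setOf_eq, Set.mem_inter_iff, Submodule.top_coe, Set.mem_univ,
      and_true]

theorem main_glue (hn : 2 ≤ n)
    (hK : K ⊆ sphereSet n) (hcpt : IsCompact K)
    (hc : SphConvex K) (hhemi : ∃ H, IsHemisphere (n - 1) H ∧ H ⊆ K) :
    K = sphereSet n ∨ IsGreatSphere (n - 1) K ∨ IsHemisphere (n - 1) K ∨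
      IsHemisphere n K ∨ IsBihedron K := by
  obtain ⟨H, ⟨V, v, hVrank, hv, hvV, hHeq⟩, hHK⟩ := hhemi
  have htot : Module.finrank ℝ (Esp n) = n + 1 := finrank_euclideanSpace_fin
  have hVn : Module.finrank ℝ V = n := by rw [hVrank]; omega
  -- find a unit normal w
  have hVorth : Module.finrank ℝ (Vᗮ : Submodule ℝ (Esp n)) = 1 := by
    have := Submodule.finrank_add_finrank_orthogonal V
    rw [hVn, htot] at this
    omega
  have hVne : (Vᗮ : Submodule ℝ (Esp n)) ≠ ⊥ := by
    intro hbot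
    rw [hbot, finrank_bot] at hVorth
    omega
  obtain ⟨w₀, hw₀V, hw₀⟩ := (Submodule.ne_bot_iff _).mp hVne
  set w : Esp n := ‖w₀‖⁻¹ • w₀ with hw_def
  have hwnorm : ‖w‖ = 1 := by
    rw [hw_def, norm_smul, norm_inv, norm_norm]
    exact inv_mul_cancel₀ (norm_ne_zero_iff.mpr hw₀)
  have hwV : w ∈ Vᗮ := Submodule.smul_mem _ _ hw₀V
  have hwne : w ≠ 0 := by
    intro h
    rw [h, norm_zero] at hwnorm
    norm_num at hwnorm
  have hvw : ⟪v, w⟫ = (0:ℝ) := Submodule.inner_right_of_mem_orthogonal hvV hwV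
  -- V is exactly the orthogonal complement of w
  have hVmem : ∀ x : Esp n, x ∈ V ↔ ⟪x, w⟫ = (0:ℝ) := by
    have hle : V ≤ (Submodule.span ℝ {w})ᗮ := by
      intro x hx
      rw [Submodule.mem_orthogonal_singleton_iff_inner_right]
      rw [real_inner_comm]
      exact Submodule.inner_right_of_mem_orthogonal hx hwV
    have hspan : Module.finrank ℝ (Submodule.span ℝ {w}) = 1 :=
      finrank_span_singleton hwne
    have horthrank : Module.finrank ℝ ((Submodule.span ℝ {w})ᗮ : Submodule ℝ (Esp n)) = n := by
      have := Submodule.finrank_add_finrank_orthogonal (Submodule.span ℝ {w})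
      rw [hspan, htot] at this
      omega
    have hVeq : V = (Submodule.span ℝ {w})ᗮ :=
      Submodule.eq_of_le_of_finrank_le hle (by rw [horthrank, hVn])
    intro x
    rw [hVeq, Submodule.mem_orthogonal_singleton_iff_inner_right, real_inner_comm]
  have hH2 : HemiHyp K v w := by
    intro x h1 h2 h3
    apply hHK
    rw [hHeq]
    exact ⟨⟨h1, (hVmem x).mpr h2⟩, h3⟩
  have hvK : v ∈ K := hH2 v hv hvw
    (by rw [real_inner_self_eq_norm_mul_norm, hv]; norm_num)
  have hw' : ‖(-w)‖ = 1 := by rw [norm_neg]; exact hwnorm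
  have hvw' : ⟪v, -w⟫ = (0:ℝ) := by rw [inner_neg_right, hvw, neg_zero]
  set a := alphaOf K v w with ha_def
  set b := alphaOf K v (-w) with hb_def
  have ha0 : 0 ≤ a := alpha_nonneg hvK
  have hb0 : 0 ≤ b := alpha_nonneg hvK
  have hapi : a ≤ Real.pi := alpha_le_pi hvK
  have hbpi : b ≤ Real.pi := alpha_le_pi hvK
  by_cases hneg : -v ∈ K
  · have hacase : a = 0 ∨ a = Real.pi := by
      rcases eq_or_lt_of_le ha0 with h | h
      · exact Or.inl h.symm
      · exact Or.inr (alpha_eq_pi hc hcpt hv hwnorm hvw hvK hneg h)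
    have hbcase : b = 0 ∨ b = Real.pi := by
      rcases eq_or_lt_of_le hb0 with h | h
      · exact Or.inl h.symm
      · exact Or.inr (alpha_eq_pi hc hcpt hv hw' hvw' hvK hneg h)
    rcases hacase with ha | ha <;> rcases hbcase with hb | hb
    · -- great sphere
      right; left
      refine ⟨V, hVrank, ?_⟩
      rw [case_great hK hcpt hc hv hwnorm hvw hH2 hneg ha hb]
      ext x
      simp only [Set.mem_setOf_eq, Set.mem_inter_iff, SetLike.mem_coe]
      constructor
      · rintro ⟨h1, h2⟩; exact ⟨h1, (hVmem x).mpr h2⟩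
      · rintro ⟨h1, h2⟩; exact ⟨h1, (hVmem x).mp h2⟩
    · right; right; right; left
      exact isHemisphere_of_sum hK hcpt hc hv hwnorm hvw hH2 (by rw [← ha_def, ← hb_def, ha, hb]; ring)
    · right; right; right; left
      exact isHemisphere_of_sum hK hcpt hc hv hwnorm hvw hH2 (by rw [← ha_def, ← hb_def, ha, hb]; ring)
    · left
      exact case_sphere hK hcpt hc hv hwnorm hvw hH2 ha hb
  · -- -v ∉ K
    have hsum_le : a + b ≤ Real.pi := by
      by_contra hgt
      push_neg at hgt
      have hapi' : a < Real.pi := by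
        rcases eq_or_lt_of_le hapi with h | h
        · exfalso
          apply hneg
          rw [← eVW_pi v w]
          exact alpha_spec hcpt hvK Real.pi ⟨Real.pi_pos.le, by rw [← ha_def, h]⟩
        · exact h
      have hbpi' : b < Real.pi := by
        rcases eq_or_lt_of_le hbpi with h | h
        · exfalso
          apply hneg
          have := alpha_spec (w := -w) hcpt hvK Real.pi ⟨Real.pi_pos.le, by rw [← hb_def, h]⟩
          rw [eVW_neg_w, eVW_neg_pi] at this
          exact this
        · exact h
      have hK1 : eVW v w a ∈ K := alpha_spec hcpt hvK a ⟨ha0, le_refl _⟩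
      have hK2 : eVW v w (2*Real.pi - b) ∈ K := by
        have := alpha_spec (w := -w) hcpt hvK b ⟨hb0, le_refl _⟩
        rw [eVW_neg_w] at this
        rw [show 2*Real.pi - b = (-b) + 2*Real.pi by ring, eVW_add_two_pi]
        exact this
      have := arc_mem hc hv hwnorm hvw hK1 hK2 (by linarith) (by linarith)
        Real.pi ⟨by linarith, by linarith⟩
      rw [eVW_pi] at this
      exact hneg this
    rcases eq_or_lt_of_le hsum_le with hsum | hsum
    · right; right; right; left
      exact isHemisphere_of_sum hK hcpt hc hv hwnorm hvw hH2 hsum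
    · rcases eq_or_lt_of_le (by positivity : (0:ℝ) ≤ a + b) with hz | hz
      · -- a = 0, b = 0 : K = H
        have ha' : a = 0 := by linarith
        have hb' : b = 0 := by linarith
        right; right; left
        refine ⟨V, v, hVrank, hv, hvV, ?_⟩
        rw [case_hset hK hcpt hc hv hwnorm hvw hH2 hneg ha' hb']
        ext x
        simp only [Set.mem_setOf_eq, Set.mem_inter_iff, SetLike.mem_coe]
        constructor
        · rintro ⟨h1, h2, h3⟩; exact ⟨⟨h1, (hVmem x).mpr h2⟩, h3⟩
        · rintro ⟨⟨h1, h2⟩, h3⟩; exact ⟨h1, (hVmem x).mp h2, h3⟩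
      · -- bihedron
        right; right; right; right
        have hvv : ⟪v, v⟫ = (1:ℝ) := by
          rw [real_inner_self_eq_norm_mul_norm, hv]; norm_num
        have hww2 : ⟪w, w⟫ = (1:ℝ) := by
          rw [real_inner_self_eq_norm_mul_norm, hwnorm]; norm_num
        have hwv : ⟪w, v⟫ = (0:ℝ) := by rw [real_inner_comm]; exact hvw
        set u₁ := Real.sin a • v + (-Real.cos a) • w with hu₁
        set u₂ := Real.sin b • v + Real.cos b • w with hu₂
        have hu₂n : ‖u₂‖ = 1 := norm_combo_one hv hwnorm hvw
          (by nlinarith [Real.sin_sq_add_cos_sq b])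
        have hsinab : 0 < Real.sin (a + b) :=
          Real.sin_pos_of_pos_of_lt_pi hz hsum
        refine ⟨u₁, u₂, ?_, ?_⟩
        · rw [LinearIndependent.pair_iff]
          intro s t hst
          have hv1 : ⟪v, u₁⟫ = Real.sin a := by rw [hu₁, inner_combo, hvv, hvw]; ring
          have hv2 : ⟪v, u₂⟫ = Real.sin b := by rw [hu₂, inner_combo, hvv, hvw]; ring
          have hw1 : ⟪w, u₁⟫ = -Real.cos a := by rw [hu₁, inner_combo, hwv, hww2]; ring
          have hw2 : ⟪w, u₂⟫ = Real.cos b := by rw [hu₂, inner_combo, hwv, hww2]; ring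
          have e1 : s * Real.sin a + t * Real.sin b = 0 := by
            have h := congrArg (fun z : Esp n => (⟪v, z⟫ : ℝ)) hst
            simp only [inner_add_right, real_inner_smul_right, hv1, hv2,
              inner_zero_right] at h
            linarith
          have e2 : s * (-Real.cos a) + t * Real.cos b = 0 := by
            have h := congrArg (fun z : Esp n => (⟪w, z⟫ : ℝ)) hst
            simp only [inner_add_right, real_inner_smul_right, hw1, hw2,
              inner_zero_right] at h
            linarith
          have hs : s * Real.sin (a + b) = 0 := by
            rw [Real.sin_add]
            linear_combination Real.cos b * e1 - Real.sin b * e2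
          have ht : t * Real.sin (a + b) = 0 := by
            rw [Real.sin_add]
            linear_combination Real.cos a * e1 + Real.sin a * e2
          exact ⟨(mul_eq_zero.mp hs).resolve_right (ne_of_gt hsinab),
            (mul_eq_zero.mp ht).resolve_right (ne_of_gt hsinab)⟩
        · exact case_bihedron hK hcpt hc hv hwnorm hvw hH2 hneg hz hsum


end C7
end Aux

/-- Lemma 2.5: a compact convex subset of `Sⁿ` containing an
`(n-1)`-hemisphere is `Sⁿ`, a great `(n-1)`-sphere, an `(n-1)`-hemisphere,
an `n`-hemisphere, or an `n`-bihedron. -/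
theorem sphConvex_contains_hemisphere_classification (n : ℕ) (hn : 2 ≤ n)
    (K : Set (Esp n)) (hK : K ⊆ sphereSet n) (hcpt : IsCompact K)
    (hc : SphConvex K) (hhemi : ∃ H, IsHemisphere (n - 1) H ∧ H ⊆ K) :
    K = sphereSet n ∨ IsGreatSphere (n - 1) K ∨ IsHemisphere (n - 1) K ∨
      IsHemisphere n K ∨ IsBihedron K :=
  main_glue hn hK hcpt hc hhemi
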